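/- Let (X, μ) be a measure space with μ finite, let k : X → ℕ be measurable with k(x) ≥ 1 for all x, let t_j : X → ℕ (j ∈ ℕ) be measurable with t_0(x) = 0 and t_{j-1}(x) < t_j(x) for all j ≥ 1 and all x, and set τ(x) = t_{k(x)}(x). Assume: (24) there exist an integer L ≥ 1 and ε > 0 such that for every j ≥ 1 and every tuple of naturals n_1 < ⋯ < n_{j-1}, writing E = {x : t_i(x) = n_i for all 1 ≤ i ≤ j-1, and k(x) ≥ j}, one has μ{x ∈ E : k(x) ≤ j+L-1} ≥ ε·μ(E); and (25) there exists C > 0 such that for every j ≥ 0, every n ≥ 1 and every tuple (n_1, …, n_j), writing F = {x : t_i(x) = n_i for all 1 ≤ i ≤ j}, one has μ{x ∈ F : t_{j+1}(x) − t_j(x) > n} ≤ C·e^{−c n^η}·μ(F), where c > 0 and η ∈ (0,1] are fixed. Then there exist c' > 0 and C₁ > 0 such that μ{x : τ(x) > n} ≤ C₁·e^{−c' n^η} for all n ≥ 1. -/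

import Mathlib

open MeasureTheory
open scoped NNReal ENNReal

lemma aux_pow_le_exp (N : ℕ) (x : ℝ) (hx : 0 ≤ x) : (x / N) ^ N ≤ Real.exp x := by
  rcases Nat.eq_zero_or_pos N with h | h
  · simp [h, Real.exp_pos x |>.le, (by positivity : (0:ℝ) < Real.exp x).le]
    simpa [h] using (Real.one_le_exp hx)
  have hN : (0:ℝ) < N := by exact_mod_cast h
  have h1 : (x / N) ^ N ≤ (x / N + 1) ^ N := by
    apply pow_le_pow_left₀ (by positivity)
    linarith
  have h2 : (x / N + 1) ^ N ≤ (Real.exp (x / N)) ^ N := by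
    apply pow_le_pow_left₀ (by positivity)
    linarith [Real.add_one_le_exp (x / N)]
  calc (x / N) ^ N ≤ (Real.exp (x / N)) ^ N := le_trans h1 h2
    _ = Real.exp x := by
        rw [← Real.exp_nat_mul]
        congr 1
        field_simp

lemma aux_summable_exp_neg_rpow {b η : ℝ} (hb : 0 < b) (hη : 0 < η) :
    Summable (fun m : ℕ => Real.exp (-b * (m : ℝ) ^ η)) := by
  set N : ℕ := ⌈2 / η⌉₊ with hN
  have hN2 : 2 ≤ η * N := by
    have : 2 / η ≤ (N : ℝ) := Nat.le_ceil _
    calc (2:ℝ) = η * (2 / η) := by field_simp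
      _ ≤ η * N := by nlinarith
  -- bound: for m ≥ 1, exp (-b m^η) ≤ (N/b)^N / m^2
  have key : ∀ m : ℕ, 1 ≤ m → Real.exp (-b * (m:ℝ) ^ η) ≤ ((N:ℝ)/b)^N * (1 / (m:ℝ)^2) := by
    intro m hm
    have hm1 : (1:ℝ) ≤ (m:ℝ) := by exact_mod_cast hm
    have hmpos : (0:ℝ) < m := by linarith
    have hNpos : (0:ℝ) < N := by
      have : 0 < (2:ℝ)/η := by positivity
      have := Nat.le_ceil (2/η)
      exact lt_of_lt_of_le ‹0 < (2:ℝ)/η› (by exact_mod_cast this)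
    have hrp : (0:ℝ) < (m:ℝ) ^ η := Real.rpow_pos_of_pos hmpos η
    have h1 : (b * (m:ℝ)^η / N) ^ N ≤ Real.exp (b * (m:ℝ)^η) :=
      aux_pow_le_exp N _ (by positivity)
    have h2 : (m:ℝ)^(2:ℕ) ≤ ((m:ℝ)^η)^N := by
      rw [← Real.rpow_natCast ((m:ℝ)^η) N, ← Real.rpow_mul (le_of_lt hmpos),
        ← Real.rpow_natCast (m:ℝ) 2]
      exact Real.rpow_le_rpow_of_exponent_le hm1 (by exact_mod_cast hN2)
    have h3 : (b/N)^N * (m:ℝ)^(2:ℕ) ≤ Real.exp (b * (m:ℝ)^η) := by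
      calc (b/N)^N * (m:ℝ)^(2:ℕ) ≤ (b/N)^N * ((m:ℝ)^η)^N := by
            apply mul_le_mul_of_nonneg_left h2 (by positivity)
        _ = (b * (m:ℝ)^η / N) ^ N := by rw [← mul_pow]; ring_nf
        _ ≤ Real.exp (b * (m:ℝ)^η) := h1
    have hexp : Real.exp (-b * (m:ℝ)^η) = 1 / Real.exp (b * (m:ℝ)^η) := by
      rw [neg_mul, Real.exp_neg, one_div]
    rw [hexp]
    have hpos : (0:ℝ) < (b/N)^N * (m:ℝ)^(2:ℕ) := by positivity
    have := one_div_le_one_div_of_le hpos h3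
    calc 1 / Real.exp (b * (m:ℝ)^η) ≤ 1 / ((b/N)^N * (m:ℝ)^(2:ℕ)) := this
      _ = ((N:ℝ)/b)^N * (1 / (m:ℝ)^2) := by
          rw [div_pow, div_pow]
          field_simp
  -- conclude summability
  have hs : Summable (fun m : ℕ => ((N:ℝ)/b)^N * (1 / ((m:ℝ)+1)^2)) := by
    apply Summable.mul_left
    have : Summable (fun m : ℕ => 1 / (m:ℝ)^2) := by
      simpa using Real.summable_one_div_nat_pow.mpr (by norm_num : 1 < 2)
    exact (summable_nat_add_iff 1).mpr this |>.congr (by intro m; push_cast; ring_nf)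
  have : Summable (fun m : ℕ => Real.exp (-b * ((m:ℝ)+1) ^ η)) := by
    apply Summable.of_nonneg_of_le (fun m => (Real.exp_pos _).le) _ hs
    intro m
    have := key (m+1) (by omega)
    push_cast at this ⊢
    convert this using 3 <;> push_cast <;> ring_nf
  have h4 : Summable (fun m : ℕ => Real.exp (-b * ((m + 1 : ℕ):ℝ) ^ η)) := by
    apply this.congr
    intro m; push_cast; ring_nf
  exact (summable_nat_add_iff 1).mp h4

lemma aux_toReal_le_ofReal_mul {A B : ℝ≥0∞} (hA : A ≠ ⊤) (hB : B ≠ ⊤) {r : ℝ}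
    (hr : 0 ≤ r) (h : A.toReal ≤ r * B.toReal) : A ≤ ENNReal.ofReal r * B := by
  rw [← ENNReal.ofReal_toReal hA, ← ENNReal.ofReal_toReal hB, ← ENNReal.ofReal_mul hr]
  exact ENNReal.ofReal_le_ofReal h

lemma aux_rpow_subadd {η : ℝ} (hη0 : 0 < η) (hη1 : η ≤ 1) (x y : ℝ) (hx : 0 ≤ x) (hy : 0 ≤ y) :
    (x + y) ^ η ≤ x ^ η + y ^ η := by
  have h := NNReal.rpow_add_le_add_rpow x.toNNReal y.toNNReal hη0.le hη1
  have h2 := NNReal.coe_le_coe.mpr h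
  rw [NNReal.coe_rpow] at h2
  push_cast at h2
  rwa [Real.coe_toNNReal _ hx, Real.coe_toNNReal _ hy] at h2

section Cylinder
variable {X : Type*} [MeasurableSpace X] (μ : Measure X) [IsFiniteMeasure μ]
variable (t : ℕ → X → ℕ)

/-- Cylinder set: the first `p` return times (indices 1..p) take prescribed values. -/
def Cyl (p : ℕ) (v : Fin p → ℕ) : Set X := {x | ∀ i : Fin p, t ((i : ℕ) + 1) x = v i}

lemma measurableSet_Cyl (ht : ∀ j, Measurable (t j)) (p : ℕ) (v : Fin p → ℕ) :
    MeasurableSet (Cyl t p v) := by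
  have h : Cyl t p v = ⋂ i : Fin p, (t ((i : ℕ) + 1)) ⁻¹' {v i} := by
    ext x; simp [Cyl, Set.mem_iInter, Set.mem_preimage]
  rw [h]
  exact MeasurableSet.iInter fun i => (ht _) (measurableSet_singleton _)

lemma disjoint_Cyl (p : ℕ) : Pairwise (Function.onFun Disjoint (fun v : Fin p → ℕ => Cyl t p v)) := by
  intro v w hvw
  rw [Function.onFun, Set.disjoint_left]
  intro x hxv hxw
  apply hvw
  funext i
  rw [← hxv i, ← hxw i]

lemma mem_Cyl_self (p : ℕ) (x : X) : x ∈ Cyl t p (fun i => t ((i : ℕ) + 1) x) :=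
  fun _ => rfl

lemma cyl_partition (ht : ∀ j, Measurable (t j)) (p : ℕ) (A : Set X) (hA : MeasurableSet A) :
    μ A = ∑' v : Fin p → ℕ, μ (A ∩ Cyl t p v) := by
  have hu : A = ⋃ v : Fin p → ℕ, A ∩ Cyl t p v := by
    ext x
    constructor
    · intro hx
      exact Set.mem_iUnion.mpr ⟨fun i => t ((i : ℕ) + 1) x, hx, mem_Cyl_self t p x⟩
    · intro hx
      rcases Set.mem_iUnion.mp hx with ⟨v, hv⟩
      exact hv.1
  conv_lhs => rw [hu]
  exact measure_iUnion
    (fun v w hvw => ((disjoint_Cyl t p hvw).mono (Set.inter_subset_right) (Set.inter_subset_right)))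
    (fun v => hA.inter (measurableSet_Cyl t ht p v))

lemma Cyl_snoc (p : ℕ) (v : Fin p → ℕ) (z : ℕ) :
    Cyl t (p + 1) (Fin.snoc v z) = Cyl t p v ∩ (t (p + 1)) ⁻¹' {z} := by
  ext x
  constructor
  · intro h
    refine ⟨fun i => ?_, ?_⟩
    · have := h i.castSucc
      rwa [Fin.snoc_castSucc, Fin.coe_castSucc] at this
    · have := h (Fin.last p)
      rwa [Fin.snoc_last, Fin.val_last] at this
  · rintro ⟨h1, h2⟩ i
    refine Fin.lastCases ?_ (fun j => ?_) i
    · rw [Fin.snoc_last, Fin.val_last]; exact h2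
    · rw [Fin.snoc_castSucc, Fin.coe_castSucc]; exact h1 j

/-- Extension of a finite tuple to `ℕ → ℕ`. -/
def extFun (p : ℕ) (v : Fin p → ℕ) (i : ℕ) : ℕ :=
  if h : 1 ≤ i ∧ i ≤ p then v ⟨i - 1, by omega⟩ else 0

lemma Cyl_eq_extFun (p : ℕ) (v : Fin p → ℕ) :
    {x | ∀ i, 1 ≤ i → i ≤ p → t i x = extFun p v i} = Cyl t p v := by
  ext x
  constructor
  · intro h i
    have h1 : 1 ≤ (i : ℕ) + 1 := by omega
    have h2 : (i : ℕ) + 1 ≤ p := by omega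
    have := h ((i : ℕ) + 1) h1 h2
    rw [extFun, dif_pos ⟨h1, h2⟩] at this
    simpa using this
  · intro h i hi1 hip
    have hlt : i - 1 < p := by omega
    have := h ⟨i - 1, hlt⟩
    rw [extFun, dif_pos ⟨hi1, hip⟩]
    have hi : i - 1 + 1 = i := by omega
    rw [hi] at this
    exact this

end Cylinder



section StepA
variable {X : Type*} [MeasurableSpace X]

lemma t_strictMono (t : ℕ → X → ℕ) (htmono : ∀ j : ℕ, 1 ≤ j → ∀ x, t (j - 1) x < t j x)
    (x : X) : StrictMono (fun j => t j x) :=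
  strictMono_nat_of_lt_succ fun n => by simpa using htmono (n + 1) (by omega) x

lemma stepA (μ : Measure X) [IsFiniteMeasure μ]
    (k : X → ℕ) (hk : Measurable k)
    (t : ℕ → X → ℕ) (ht : ∀ j, Measurable (t j))
    (htmono : ∀ j : ℕ, 1 ≤ j → ∀ x, t (j - 1) x < t j x)
    (L : ℕ) (hL : 1 ≤ L) (ε : ℝ) (hε : 0 < ε)
    (h24 : ∀ j : ℕ, 1 ≤ j → ∀ n : ℕ → ℕ, StrictMonoOn n (Set.Icc 1 (j - 1)) →
      ε * (μ {x | (∀ i, 1 ≤ i → i ≤ j - 1 → t i x = n i) ∧ j ≤ k x}).toReal ≤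
        (μ {x | ((∀ i, 1 ≤ i → i ≤ j - 1 → t i x = n i) ∧ j ≤ k x) ∧
          k x ≤ j + L - 1}).toReal)
    (j : ℕ) (hj : 1 ≤ j) :
    μ {x | j + L ≤ k x} ≤ ENNReal.ofReal (1 - min ε 2⁻¹) * μ {x | j ≤ k x} := by
  set ε₀ : ℝ := min ε 2⁻¹ with hε₀def
  have hε₀pos : 0 < ε₀ := lt_min hε (by norm_num)
  have hε₀le : ε₀ ≤ ε := min_le_left _ _
  have hθnonneg : 0 ≤ 1 - ε₀ := by
    have : ε₀ ≤ 2⁻¹ := min_le_right _ _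
    linarith
  have hmk1 : MeasurableSet {x | j + L ≤ k x} := hk measurableSet_Ici
  have hmk2 : MeasurableSet {x | j ≤ k x} := hk measurableSet_Ici
  rw [cyl_partition μ t ht (j - 1) _ hmk1, cyl_partition μ t ht (j - 1) _ hmk2,
    ← ENNReal.tsum_mul_left]
  apply ENNReal.tsum_le_tsum
  intro v
  by_cases hsm : StrictMono v
  · -- apply h24 with extFun
    have hmono : StrictMonoOn (extFun (j - 1) v) (Set.Icc 1 (j - 1)) := by
      intro i hi i' hi' hlt
      have hii : i - 1 < j - 1 := by
        have := hi.1; have := hi.2; have := hi'.1; have := hi'.2; omega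
      have hii' : i' - 1 < j - 1 := by
        have := hi'.1; have := hi'.2; omega
      simp only [extFun, dif_pos (Set.mem_Icc.mp hi), dif_pos (Set.mem_Icc.mp hi')]
      apply hsm
      rw [Fin.mk_lt_mk]
      have := hi.1; omega
    have h := h24 j hj (extFun (j - 1) v) hmono
    rw [show {x | (∀ i, 1 ≤ i → i ≤ j - 1 → t i x = extFun (j - 1) v i) ∧ j ≤ k x}
        = {x | j ≤ k x} ∩ Cyl t (j - 1) v by
          rw [← Cyl_eq_extFun]; ext x; simp only [Set.mem_setOf_eq, Set.mem_inter_iff]; tauto] at h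
    set E : Set X := {x | j ≤ k x} ∩ Cyl t (j - 1) v with hEdef
    set B : Set X := {x | j + L ≤ k x} ∩ Cyl t (j - 1) v with hBdef
    set G : Set X := E ∩ {x | k x ≤ j + L - 1} with hGdef
    have hset : {x | ((∀ i, 1 ≤ i → i ≤ j - 1 → t i x = extFun (j - 1) v i) ∧ j ≤ k x) ∧
        k x ≤ j + L - 1} = G := by
      rw [hGdef, hEdef, ← Cyl_eq_extFun]
      ext x; simp only [Set.mem_setOf_eq, Set.mem_inter_iff]; tauto
    rw [hset] at h
    have hmE : MeasurableSet E := hmk2.inter (measurableSet_Cyl t ht _ v)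
    have hmB : MeasurableSet B := hmk1.inter (measurableSet_Cyl t ht _ v)
    have hmG : MeasurableSet G := hmE.inter (hk measurableSet_Iic)
    have hdisj : Disjoint G B := by
      rw [Set.disjoint_left]
      rintro x ⟨_, hx2⟩ ⟨hx3, _⟩
      simp only [Set.mem_setOf_eq] at hx2 hx3
      omega
    have hunion : G ∪ B = E := by
      ext x
      simp only [hGdef, hBdef, hEdef, Set.mem_union, Set.mem_inter_iff, Set.mem_setOf_eq]
      constructor
      · rintro (⟨⟨h1, h2⟩, _⟩ | ⟨h1, h2⟩)
        · exact ⟨h1, h2⟩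
        · exact ⟨by omega, h2⟩
      · rintro ⟨h1, h2⟩
        by_cases hcase : k x ≤ j + L - 1
        · exact Or.inl ⟨⟨h1, h2⟩, hcase⟩
        · exact Or.inr ⟨by omega, h2⟩
    have hEsum : μ E = μ G + μ B := by
      rw [← hunion, measure_union hdisj hmB]
    have hfinE : μ E ≠ ⊤ := measure_ne_top μ E
    have hfinB : μ B ≠ ⊤ := measure_ne_top μ B
    have hfinG : μ G ≠ ⊤ := measure_ne_top μ G
    have htoReal : (μ E).toReal = (μ G).toReal + (μ B).toReal := by
      rw [hEsum, ENNReal.toReal_add hfinG hfinB]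
    have hGge : ε₀ * (μ E).toReal ≤ (μ G).toReal := by
      calc ε₀ * (μ E).toReal ≤ ε * (μ E).toReal :=
            mul_le_mul_of_nonneg_right hε₀le ENNReal.toReal_nonneg
        _ ≤ (μ G).toReal := h
    have hBle : (μ B).toReal ≤ (1 - ε₀) * (μ E).toReal := by nlinarith [ENNReal.toReal_nonneg (a := μ E)]
    exact aux_toReal_le_ofReal_mul hfinB hfinE hθnonneg hBle
  · -- Cyl is empty
    have hempty : {x | j + L ≤ k x} ∩ Cyl t (j - 1) v = ∅ := by
      rw [Set.eq_empty_iff_forall_notMem]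
      rintro x ⟨_, hx2⟩
      apply hsm
      intro i i' hii
      rw [← hx2 i, ← hx2 i']
      exact t_strictMono t htmono x (by omega : (i : ℕ) + 1 < (i' : ℕ) + 1)
    rw [hempty, measure_empty]
    exact zero_le

lemma geoDecay (μ : Measure X) [IsFiniteMeasure μ]
    (k : X → ℕ) (hk : Measurable k)
    (t : ℕ → X → ℕ) (ht : ∀ j, Measurable (t j))
    (htmono : ∀ j : ℕ, 1 ≤ j → ∀ x, t (j - 1) x < t j x)
    (L : ℕ) (hL : 1 ≤ L) (ε : ℝ) (hε : 0 < ε)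
    (h24 : ∀ j : ℕ, 1 ≤ j → ∀ n : ℕ → ℕ, StrictMonoOn n (Set.Icc 1 (j - 1)) →
      ε * (μ {x | (∀ i, 1 ≤ i → i ≤ j - 1 → t i x = n i) ∧ j ≤ k x}).toReal ≤
        (μ {x | ((∀ i, 1 ≤ i → i ≤ j - 1 → t i x = n i) ∧ j ≤ k x) ∧
          k x ≤ j + L - 1}).toReal)
    (m : ℕ) :
    μ {x | 1 + m * L ≤ k x} ≤ (ENNReal.ofReal (1 - min ε 2⁻¹)) ^ m * μ Set.univ := by
  induction m with
  | zero => simpa using measure_mono (Set.subset_univ _)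
  | succ m ih =>
    have hset : {x | 1 + (m + 1) * L ≤ k x} = {x | (1 + m * L) + L ≤ k x} := by
      ext x; simp only [Set.mem_setOf_eq, Nat.succ_mul]; omega
    rw [hset]
    calc μ {x | (1 + m * L) + L ≤ k x}
        ≤ ENNReal.ofReal (1 - min ε 2⁻¹) * μ {x | 1 + m * L ≤ k x} :=
          stepA μ k hk t ht htmono L hL ε hε h24 (1 + m * L) (by omega)
      _ ≤ ENNReal.ofReal (1 - min ε 2⁻¹) * ((ENNReal.ofReal (1 - min ε 2⁻¹)) ^ m * μ Set.univ) :=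
          mul_le_mul_right ih _
      _ = (ENNReal.ofReal (1 - min ε 2⁻¹)) ^ (m + 1) * μ Set.univ := by ring

end StepA

section Defs
variable {X : Type*} [MeasurableSpace X]

def gapf (t : ℕ → X → ℕ) (j : ℕ) (x : X) : ℕ := t (j + 1) x - t j x

noncomputable def Wsum (t : ℕ → X → ℕ) (η : ℝ) (p : ℕ) (x : X) : ℝ :=
  ∑ i ∈ Finset.range p, ((gapf t i x : ℕ) : ℝ) ^ η

def lastv (p : ℕ) (v : Fin p → ℕ) : ℕ := if h : p = 0 then 0 else v ⟨p - 1, by omega⟩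

noncomputable def wl (η : ℝ) (p : ℕ) : (Fin p → ℕ) → ℝ :=
  Nat.rec (motive := fun p => (Fin p → ℕ) → ℝ) (fun _ => 0)
    (fun p ih v => ih (Fin.init v) +
      ((v (Fin.last p) - lastv p (Fin.init v) : ℕ) : ℝ) ^ η) p

lemma wl_zero (η : ℝ) (v : Fin 0 → ℕ) : wl η 0 v = 0 := rfl

lemma wl_succ (η : ℝ) (p : ℕ) (v : Fin (p + 1) → ℕ) :
    wl η (p + 1) v = wl η p (Fin.init v) +
      ((v (Fin.last p) - lastv p (Fin.init v) : ℕ) : ℝ) ^ η := rfl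

lemma wl_snoc (η : ℝ) (p : ℕ) (v : Fin p → ℕ) (z : ℕ) :
    wl η (p + 1) (Fin.snoc v z) = wl η p v + ((z - lastv p v : ℕ) : ℝ) ^ η := by
  simp [wl_succ, Fin.init_snoc, Fin.snoc_last]

lemma cyl_vals (t : ℕ → X → ℕ) (η : ℝ) (ht0 : ∀ x, t 0 x = 0) :
    ∀ (p : ℕ) (v : Fin p → ℕ) (x : X), x ∈ Cyl t p v →
      t p x = lastv p v ∧ Wsum t η p x = wl η p v := by
  intro p
  induction p with
  | zero =>
    intro v x _
    refine ⟨by rw [ht0 x]; rfl, by simp [Wsum, wl_zero]⟩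
  | succ p ih =>
    intro v x hx
    have hx' : x ∈ Cyl t p (Fin.init v) := by
      intro i
      have := hx i.castSucc
      rwa [Fin.coe_castSucc] at this
    obtain ⟨ih1, ih2⟩ := ih (Fin.init v) x hx'
    have hlast : t (p + 1) x = v (Fin.last p) := by
      have := hx (Fin.last p)
      rwa [Fin.val_last] at this
    constructor
    · rw [hlast, lastv, dif_neg (by omega : ¬ p + 1 = 0)]
      congr 1
    · rw [Wsum, Finset.sum_range_succ, ← Wsum, ih2]
      show wl η p (Fin.init v) + ((gapf t p x : ℕ) : ℝ) ^ η = wl η (p + 1) v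
      rw [wl_succ]
      congr 3
      rw [gapf, hlast, ih1]

lemma W_ge (t : ℕ → X → ℕ) {η : ℝ} (hη0 : 0 < η) (hη1 : η ≤ 1)
    (ht0 : ∀ x, t 0 x = 0) (htmono : ∀ j : ℕ, 1 ≤ j → ∀ x, t (j - 1) x < t j x)
    (p : ℕ) (x : X) : ((t p x : ℕ) : ℝ) ^ η ≤ Wsum t η p x := by
  induction p with
  | zero => rw [ht0 x]; simp [Wsum, Real.zero_rpow hη0.ne']
  | succ p ih =>
    have hlt : t p x < t (p + 1) x := by simpa using htmono (p + 1) (by omega) x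
    have hsplit : t (p + 1) x = t p x + gapf t p x := by rw [gapf]; omega
    rw [Wsum, Finset.sum_range_succ, ← Wsum, hsplit]
    push_cast
    calc ((t p x : ℝ) + (gapf t p x : ℝ)) ^ η
        ≤ (t p x : ℝ) ^ η + (gapf t p x : ℝ) ^ η :=
          aux_rpow_subadd hη0 hη1 _ _ (Nat.cast_nonneg _) (Nat.cast_nonneg _)
      _ ≤ Wsum t η p x + (gapf t p x : ℝ) ^ η := by
          exact add_le_add_left ih _

end Defs
section Moments
variable {X : Type*} [MeasurableSpace X]

/-- The per-step moment bound constant. -/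
noncomputable def DD (C c η : ℝ) : ℝ≥0∞ :=
  ENNReal.ofReal (Real.exp (c / 2)) +
    ∑' m : ℕ, (if 1 ≤ m then
      ENNReal.ofReal (Real.exp ((c / 2) * (((m : ℕ) + 1 : ℕ) : ℝ) ^ η) -
          Real.exp ((c / 2) * ((m : ℕ) : ℝ) ^ η)) *
        ENNReal.ofReal (C * Real.exp (-c * ((m : ℕ) : ℝ) ^ η)) else 0)

lemma DD_ne_top {C c η : ℝ} (hc : 0 < c) (hη0 : 0 < η) (hη1 : η ≤ 1) (hC : 0 < C) :
    DD C c η ≠ ⊤ := by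
  have hsum : Summable (fun m : ℕ => C * Real.exp (c / 2) * Real.exp (-(c / 2) * (m : ℝ) ^ η)) :=
    (aux_summable_exp_neg_rpow (by linarith : 0 < c / 2) hη0).mul_left _
  have hbound : ∀ m : ℕ, (if 1 ≤ m then
      ENNReal.ofReal (Real.exp ((c / 2) * (((m : ℕ) + 1 : ℕ) : ℝ) ^ η) -
          Real.exp ((c / 2) * ((m : ℕ) : ℝ) ^ η)) *
        ENNReal.ofReal (C * Real.exp (-c * ((m : ℕ) : ℝ) ^ η)) else 0)
      ≤ ENNReal.ofReal (C * Real.exp (c / 2) * Real.exp (-(c / 2) * (m : ℝ) ^ η)) := by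
    intro m
    by_cases hm : 1 ≤ m
    · have hnn1 : 0 ≤ Real.exp ((c / 2) * (((m : ℕ) + 1 : ℕ) : ℝ) ^ η) -
          Real.exp ((c / 2) * ((m : ℕ) : ℝ) ^ η) := by
        apply sub_nonneg.mpr
        apply Real.exp_le_exp.mpr
        apply mul_le_mul_of_nonneg_left _ (by linarith : (0:ℝ) ≤ c / 2)
        apply Real.rpow_le_rpow (Nat.cast_nonneg _) _ hη0.le
        push_cast; linarith
      rw [if_pos hm, ← ENNReal.ofReal_mul hnn1]
      apply ENNReal.ofReal_le_ofReal
      have h1 : Real.exp ((c / 2) * (((m : ℕ) + 1 : ℕ) : ℝ) ^ η) -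
          Real.exp ((c / 2) * ((m : ℕ) : ℝ) ^ η) ≤ Real.exp ((c / 2) * (((m : ℝ) + 1)) ^ η) := by
        push_cast
        nlinarith [Real.exp_pos ((c / 2) * ((m : ℕ) : ℝ) ^ η)]
      have h2 : ((m : ℝ) + 1) ^ η ≤ (m : ℝ) ^ η + 1 := by
        have := aux_rpow_subadd hη0 hη1 (m : ℝ) 1 (Nat.cast_nonneg _) zero_le_one
        rwa [Real.one_rpow] at this
      have h3 : Real.exp ((c / 2) * ((m : ℝ) + 1) ^ η) ≤
          Real.exp (c / 2) * Real.exp ((c / 2) * (m : ℝ) ^ η) := by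
        rw [← Real.exp_add]
        apply Real.exp_le_exp.mpr
        nlinarith
      calc (Real.exp ((c / 2) * (((m : ℕ) + 1 : ℕ) : ℝ) ^ η) -
            Real.exp ((c / 2) * ((m : ℕ) : ℝ) ^ η)) * (C * Real.exp (-c * ((m : ℕ) : ℝ) ^ η))
          ≤ (Real.exp (c / 2) * Real.exp ((c / 2) * (m : ℝ) ^ η)) *
              (C * Real.exp (-c * (m : ℝ) ^ η)) := by
            apply mul_le_mul_of_nonneg_right (le_trans h1 h3) (by positivity)
        _ = C * Real.exp (c / 2) * Real.exp (-(c / 2) * (m : ℝ) ^ η) := by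
            rw [show Real.exp (c / 2) * Real.exp (c / 2 * (m:ℝ) ^ η) * (C * Real.exp (-c * (m:ℝ) ^ η))
                = C * Real.exp (c / 2) * (Real.exp (c / 2 * (m:ℝ) ^ η) * Real.exp (-c * (m:ℝ) ^ η)) by ring,
              ← Real.exp_add, show c / 2 * (m:ℝ) ^ η + -c * (m:ℝ) ^ η = -(c/2) * (m:ℝ) ^ η by ring]
      -- done
    · rw [if_neg hm]
      exact zero_le
  have : DD C c η ≤ ENNReal.ofReal (Real.exp (c / 2)) +
      ∑' m : ℕ, ENNReal.ofReal (C * Real.exp (c / 2) * Real.exp (-(c / 2) * (m : ℝ) ^ η)) :=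
    add_le_add_right (ENNReal.tsum_le_tsum hbound) _
  rw [← ENNReal.ofReal_tsum_of_nonneg (fun m => by positivity) hsum] at this
  exact ne_top_of_le_ne_top (by simp) this

lemma one_le_DD {C c η : ℝ} (hc : 0 < c) : 1 ≤ DD C c η := by
  have h1 : (1 : ℝ≥0∞) ≤ ENNReal.ofReal (Real.exp (c / 2)) := by
    rw [show (1 : ℝ≥0∞) = ENNReal.ofReal 1 by simp]
    exact ENNReal.ofReal_le_ofReal (Real.one_le_exp (by linarith))
  exact le_trans h1 le_self_add

end Moments
section Inner
variable {X : Type*} [MeasurableSpace X]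

lemma tailCyl (μ : Measure X) [IsFiniteMeasure μ]
    (t : ℕ → X → ℕ) (ht : ∀ j, Measurable (t j))
    (c η : ℝ) (C : ℝ) (hC : 0 < C)
    (h25 : ∀ j : ℕ, ∀ n : ℕ, 1 ≤ n → ∀ ν : ℕ → ℕ,
      (μ {x | (∀ i, 1 ≤ i → i ≤ j → t i x = ν i) ∧ n < t (j + 1) x - t j x}).toReal ≤
        C * Real.exp (-c * (n : ℝ) ^ η) *
          (μ {x | ∀ i, 1 ≤ i → i ≤ j → t i x = ν i}).toReal)
    (p : ℕ) (v : Fin p → ℕ) (m : ℕ) (hm : 1 ≤ m) :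
    μ (Cyl t p v ∩ {x | m < gapf t p x}) ≤
      ENNReal.ofReal (C * Real.exp (-c * (m : ℝ) ^ η)) * μ (Cyl t p v) := by
  have h := h25 p m hm (extFun p v)
  rw [Cyl_eq_extFun] at h
  have hset : {x | (∀ i, 1 ≤ i → i ≤ p → t i x = extFun p v i) ∧ m < t (p + 1) x - t p x}
      = Cyl t p v ∩ {x | m < gapf t p x} := by
    rw [← Cyl_eq_extFun]
    ext x
    exact Iff.rfl
  rw [hset] at h
  exact aux_toReal_le_ofReal_mul (measure_ne_top μ _) (measure_ne_top μ _)
    (by positivity) h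

lemma innerSum (μ : Measure X) [IsFiniteMeasure μ]
    (t : ℕ → X → ℕ) (ht : ∀ j, Measurable (t j)) (ht0 : ∀ x, t 0 x = 0)
    (c η : ℝ) (hc : 0 < c) (hη0 : 0 < η) (hη1 : η ≤ 1)
    (C : ℝ) (hC : 0 < C)
    (h25 : ∀ j : ℕ, ∀ n : ℕ, 1 ≤ n → ∀ ν : ℕ → ℕ,
      (μ {x | (∀ i, 1 ≤ i → i ≤ j → t i x = ν i) ∧ n < t (j + 1) x - t j x}).toReal ≤
        C * Real.exp (-c * (n : ℝ) ^ η) *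
          (μ {x | ∀ i, 1 ≤ i → i ≤ j → t i x = ν i}).toReal)
    (p : ℕ) (v : Fin p → ℕ) :
    ∑' z : ℕ, ENNReal.ofReal (Real.exp ((c / 2) * ((z - lastv p v : ℕ) : ℝ) ^ η)) *
        μ (Cyl t p v ∩ (t (p + 1)) ⁻¹' {z})
      ≤ DD C c η * μ (Cyl t p v) := by
  set a : ℝ := c / 2 with ha
  have hapos : 0 < a := by rw [ha]; linarith
  set lv : ℕ := lastv p v with hlv
  set F : Set X := Cyl t p v with hF
  have hFmeas : MeasurableSet F := measurableSet_Cyl t ht p v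
  set G : ℕ → Set X := fun z => F ∩ (t (p + 1)) ⁻¹' {z} with hG
  have hGmeas : ∀ z, MeasurableSet (G z) :=
    fun z => hFmeas.inter ((ht _) (measurableSet_singleton _))
  have hGdisj : Pairwise (Function.onFun Disjoint G) := by
    intro z w hzw
    rw [Function.onFun, Set.disjoint_left]
    rintro x ⟨_, hz⟩ ⟨_, hw⟩
    exact hzw ((Set.mem_singleton_iff.mp hz).symm.trans (Set.mem_singleton_iff.mp hw))
  have hsumG : ∑' z, μ (G z) = μ F := by
    rw [← measure_iUnion hGdisj hGmeas]
    congr 1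
    ext x
    simp only [hG, Set.mem_iUnion, Set.mem_inter_iff, Set.mem_preimage, Set.mem_singleton_iff]
    constructor
    · rintro ⟨z, hx, _⟩; exact hx
    · intro hx; exact ⟨t (p + 1) x, hx, rfl⟩
  have htp : ∀ x ∈ F, t p x = lv := fun x hx => (cyl_vals t η ht0 p v x hx).1
  have hgap : ∀ z : ℕ, ∀ x ∈ G z, gapf t p x = z - lv := by
    rintro z x ⟨hxF, hxz⟩
    rw [gapf, Set.mem_preimage, Set.mem_singleton_iff] at *
    rw [hxz, htp x hxF]
  -- the function f
  set f : ℕ → ℝ := fun m => Real.exp (a * (m : ℝ) ^ η) with hf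
  have hfpos : ∀ m, 0 < f m := fun m => Real.exp_pos _
  have hfmono : Monotone f := by
    intro m m' hmm
    apply Real.exp_le_exp.mpr
    apply mul_le_mul_of_nonneg_left _ hapos.le
    exact Real.rpow_le_rpow (Nat.cast_nonneg _) (Nat.cast_le.mpr hmm) hη0.le
  have hf1 : f 1 = Real.exp a := by simp [hf]
  have hf0 : f 0 = 1 := by simp [hf, Real.zero_rpow hη0.ne']
  -- key pointwise bound
  have key : ∀ z : ℕ, ENNReal.ofReal (f (z - lv)) * μ (G z) ≤
      ENNReal.ofReal (Real.exp a) * μ (G z) +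
        ∑' m : ℕ, (if 1 ≤ m ∧ m < z - lv then
          ENNReal.ofReal (f (m + 1) - f m) * μ (G z) else 0) := by
    intro z
    rcases Nat.eq_zero_or_pos (z - lv) with hg | hg
    · rw [hg, hf0]
      refine le_trans ?_ le_self_add
      apply mul_le_mul_left
      exact ENNReal.ofReal_le_ofReal (Real.one_le_exp hapos.le)
    · set g : ℕ := z - lv with hgdef
      have htel : f g = f 1 + ∑ m ∈ Finset.Ico 1 g, (f (m + 1) - f m) := by
        have h1 : ∑ m ∈ Finset.Ico 1 g, (f (m + 1) - f m)
            = ∑ i ∈ Finset.range (g - 1), (f (1 + i + 1) - f (1 + i)) :=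
          Finset.sum_Ico_eq_sum_range (fun m => f (m + 1) - f m) 1 g
        have h2 : ∑ i ∈ Finset.range (g - 1), (f (1 + i + 1) - f (1 + i))
            = f (g - 1 + 1) - f (0 + 1) := by
          have := Finset.sum_range_sub (fun i => f (i + 1)) (g - 1)
          rw [← this]
          apply Finset.sum_congr rfl
          intro i _
          congr 2 <;> omega
        rw [h1, h2, show g - 1 + 1 = g by omega, show (0 : ℕ) + 1 = 1 by omega]
        ring
      have hnn : ∀ m ∈ Finset.Ico 1 g, 0 ≤ f (m + 1) - f m :=
        fun m _ => sub_nonneg.mpr (hfmono (Nat.le_succ m))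
      have hnns : 0 ≤ ∑ m ∈ Finset.Ico 1 g, (f (m + 1) - f m) := Finset.sum_nonneg hnn
      apply le_of_eq
      calc ENNReal.ofReal (f g) * μ (G z)
          = (ENNReal.ofReal (f 1) + ENNReal.ofReal (∑ m ∈ Finset.Ico 1 g, (f (m + 1) - f m)))
              * μ (G z) := by rw [← ENNReal.ofReal_add (hfpos 1).le hnns, ← htel]
        _ = ENNReal.ofReal (Real.exp a) * μ (G z) +
              (∑ m ∈ Finset.Ico 1 g, ENNReal.ofReal (f (m + 1) - f m)) * μ (G z) := by
            rw [hf1, ENNReal.ofReal_sum_of_nonneg hnn, add_mul]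
        _ = ENNReal.ofReal (Real.exp a) * μ (G z) +
              ∑ m ∈ Finset.Ico 1 g, ENNReal.ofReal (f (m + 1) - f m) * μ (G z) := by
            rw [Finset.sum_mul]
        _ = ENNReal.ofReal (Real.exp a) * μ (G z) +
              ∑' m : ℕ, (if 1 ≤ m ∧ m < g then
                ENNReal.ofReal (f (m + 1) - f m) * μ (G z) else 0) := by
            congr 1
            rw [tsum_eq_sum (s := Finset.Ico 1 g) (fun m hm => by
              rw [if_neg]; intro hcon; exact hm (Finset.mem_Ico.mpr ⟨hcon.1, hcon.2⟩))]
            apply Finset.sum_congr rfl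
            intro m hm
            rw [if_pos]
            exact ⟨(Finset.mem_Ico.mp hm).1, (Finset.mem_Ico.mp hm).2⟩
  -- sum over z
  calc ∑' z : ℕ, ENNReal.ofReal (f (z - lv)) * μ (G z)
      ≤ ∑' z : ℕ, (ENNReal.ofReal (Real.exp a) * μ (G z) +
          ∑' m : ℕ, (if 1 ≤ m ∧ m < z - lv then
            ENNReal.ofReal (f (m + 1) - f m) * μ (G z) else 0)) := ENNReal.tsum_le_tsum key
    _ = ENNReal.ofReal (Real.exp a) * μ F +
          ∑' m : ℕ, ∑' z : ℕ, (if 1 ≤ m ∧ m < z - lv then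
            ENNReal.ofReal (f (m + 1) - f m) * μ (G z) else 0) := by
        rw [ENNReal.tsum_add, ENNReal.tsum_mul_left, hsumG, ENNReal.tsum_comm]
    _ ≤ ENNReal.ofReal (Real.exp a) * μ F +
          ∑' m : ℕ, (if 1 ≤ m then
            ENNReal.ofReal (f (m + 1) - f m) *
              (ENNReal.ofReal (C * Real.exp (-c * (m : ℝ) ^ η)) * μ F) else 0) := by
        apply add_le_add_right
        apply ENNReal.tsum_le_tsum
        intro m
        by_cases hm : 1 ≤ m
        · rw [if_pos hm]
          have hstep1 : ∑' z : ℕ, (if 1 ≤ m ∧ m < z - lv then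
              ENNReal.ofReal (f (m + 1) - f m) * μ (G z) else 0)
              = ENNReal.ofReal (f (m + 1) - f m) *
                ∑' z : ℕ, μ (if m < z - lv then G z else ∅) := by
            rw [← ENNReal.tsum_mul_left]
            apply tsum_congr
            intro z
            by_cases hz : m < z - lv
            · rw [if_pos ⟨hm, hz⟩, if_pos hz]
            · rw [if_neg (fun hcon => hz hcon.2), if_neg hz, measure_empty, mul_zero]
          rw [hstep1]
          apply mul_le_mul_right
          have hsub : (⋃ z, if m < z - lv then G z else ∅) ⊆ F ∩ {x | m < gapf t p x} := by
            intro x hx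
            rcases Set.mem_iUnion.mp hx with ⟨z, hz⟩
            by_cases hcond : m < z - lv
            · rw [if_pos hcond] at hz
              exact ⟨hz.1, by rw [Set.mem_setOf_eq, hgap z x hz]; exact hcond⟩
            · rw [if_neg hcond] at hz; exact absurd hz (Set.notMem_empty x)
          calc ∑' z : ℕ, μ (if m < z - lv then G z else ∅)
              = μ (⋃ z, if m < z - lv then G z else ∅) := by
                rw [measure_iUnion ?_ ?_]
                · intro z w hzw
                  rw [Function.onFun]
                  apply Disjoint.mono ?_ ?_ (hGdisj hzw) <;> split <;>
                    simp [Set.empty_subset, Set.Subset.refl]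
                · intro z
                  split
                  · exact hGmeas z
                  · exact MeasurableSet.empty
            _ ≤ μ (F ∩ {x | m < gapf t p x}) := measure_mono hsub
            _ ≤ ENNReal.ofReal (C * Real.exp (-c * (m : ℝ) ^ η)) * μ F :=
                tailCyl μ t ht c η C hC h25 p v m hm
        · rw [if_neg hm]
          have : ∀ z : ℕ, (if 1 ≤ m ∧ m < z - lv then
              ENNReal.ofReal (f (m + 1) - f m) * μ (G z) else 0) = 0 :=
            fun z => if_neg (fun hcon => hm hcon.1)
          rw [tsum_congr this]
          simp
    _ ≤ DD C c η * μ F := by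
        rw [DD, add_mul, ← ENNReal.tsum_mul_right]
        apply add_le_add_right
        apply ENNReal.tsum_le_tsum
        intro m
        by_cases hm : 1 ≤ m
        · rw [if_pos hm, if_pos hm, mul_assoc]
        · rw [if_neg hm, if_neg hm, zero_mul]

end Inner
section MmtSec
variable {X : Type*} [MeasurableSpace X]

noncomputable def Mmt (μ : Measure X) (t : ℕ → X → ℕ) (η a : ℝ) (p : ℕ) : ℝ≥0∞ :=
  ∑' v : Fin p → ℕ, ENNReal.ofReal (Real.exp (a * wl η p v)) * μ (Cyl t p v)

lemma Mmt_zero (μ : Measure X) (t : ℕ → X → ℕ) (η a : ℝ) :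
    Mmt μ t η a 0 = μ Set.univ := by
  haveI : Unique (Fin 0 → ℕ) := ⟨⟨fun i => i.elim0⟩, fun v => funext fun i => i.elim0⟩
  rw [Mmt, tsum_eq_single (default : Fin 0 → ℕ)
    (fun v hv => absurd (Subsingleton.elim v default) hv)]
  have h1 : Cyl t 0 (default : Fin 0 → ℕ) = Set.univ := by
    ext x; simp only [Cyl, Set.mem_setOf_eq, Set.mem_univ, iff_true]
    exact fun i => i.elim0
  rw [h1, wl_zero, mul_zero, Real.exp_zero, ENNReal.ofReal_one, one_mul]

lemma Mmt_succ_le (μ : Measure X) [IsFiniteMeasure μ]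
    (t : ℕ → X → ℕ) (ht : ∀ j, Measurable (t j)) (ht0 : ∀ x, t 0 x = 0)
    (c η : ℝ) (hc : 0 < c) (hη0 : 0 < η) (hη1 : η ≤ 1)
    (C : ℝ) (hC : 0 < C)
    (h25 : ∀ j : ℕ, ∀ n : ℕ, 1 ≤ n → ∀ ν : ℕ → ℕ,
      (μ {x | (∀ i, 1 ≤ i → i ≤ j → t i x = ν i) ∧ n < t (j + 1) x - t j x}).toReal ≤
        C * Real.exp (-c * (n : ℝ) ^ η) *
          (μ {x | ∀ i, 1 ≤ i → i ≤ j → t i x = ν i}).toReal)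
    (p : ℕ) :
    Mmt μ t η (c / 2) (p + 1) ≤ DD C c η * Mmt μ t η (c / 2) p := by
  rw [Mmt, ← Equiv.tsum_eq (Fin.snocEquiv (fun _ => ℕ))
    (fun v => ENNReal.ofReal (Real.exp ((c / 2) * wl η (p + 1) v)) * μ (Cyl t (p + 1) v))]
  have happ : ∀ y : ℕ × (Fin p → ℕ), (Fin.snocEquiv (fun _ => ℕ)) y = Fin.snoc y.2 y.1 := by
    intro y; funext i; rfl
  calc ∑' y : ℕ × (Fin p → ℕ),
        ENNReal.ofReal (Real.exp ((c / 2) * wl η (p + 1) ((Fin.snocEquiv (fun _ => ℕ)) y))) *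
          μ (Cyl t (p + 1) ((Fin.snocEquiv (fun _ => ℕ)) y))
      = ∑' z : ℕ, ∑' v : Fin p → ℕ,
          ENNReal.ofReal (Real.exp ((c / 2) * wl η (p + 1) (Fin.snoc v z))) *
            μ (Cyl t (p + 1) (Fin.snoc v z)) := by
        rw [ENNReal.tsum_prod']
        exact tsum_congr fun z => tsum_congr fun v => by rw [happ (z, v)]
    _ = ∑' v : Fin p → ℕ, ∑' z : ℕ,
          ENNReal.ofReal (Real.exp ((c / 2) * wl η p v)) *
            (ENNReal.ofReal (Real.exp ((c / 2) * ((z - lastv p v : ℕ) : ℝ) ^ η)) *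
              μ (Cyl t p v ∩ (t (p + 1)) ⁻¹' {z})) := by
        rw [ENNReal.tsum_comm]
        apply tsum_congr; intro v; apply tsum_congr; intro z
        rw [wl_snoc, Cyl_snoc, mul_add, Real.exp_add,
          ENNReal.ofReal_mul (Real.exp_nonneg _), mul_assoc]
    _ = ∑' v : Fin p → ℕ, ENNReal.ofReal (Real.exp ((c / 2) * wl η p v)) *
          ∑' z : ℕ, ENNReal.ofReal (Real.exp ((c / 2) * ((z - lastv p v : ℕ) : ℝ) ^ η)) *
            μ (Cyl t p v ∩ (t (p + 1)) ⁻¹' {z}) := by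
        exact tsum_congr fun v => ENNReal.tsum_mul_left
    _ ≤ ∑' v : Fin p → ℕ, ENNReal.ofReal (Real.exp ((c / 2) * wl η p v)) *
          (DD C c η * μ (Cyl t p v)) := by
        apply ENNReal.tsum_le_tsum
        intro v
        exact mul_le_mul_right (innerSum μ t ht ht0 c η hc hη0 hη1 C hC h25 p v) _
    _ = DD C c η * Mmt μ t η (c / 2) p := by
        rw [Mmt, ← ENNReal.tsum_mul_left]
        apply tsum_congr; intro v
        ring

lemma Mmt_le (μ : Measure X) [IsFiniteMeasure μ]
    (t : ℕ → X → ℕ) (ht : ∀ j, Measurable (t j)) (ht0 : ∀ x, t 0 x = 0)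
    (c η : ℝ) (hc : 0 < c) (hη0 : 0 < η) (hη1 : η ≤ 1)
    (C : ℝ) (hC : 0 < C)
    (h25 : ∀ j : ℕ, ∀ n : ℕ, 1 ≤ n → ∀ ν : ℕ → ℕ,
      (μ {x | (∀ i, 1 ≤ i → i ≤ j → t i x = ν i) ∧ n < t (j + 1) x - t j x}).toReal ≤
        C * Real.exp (-c * (n : ℝ) ^ η) *
          (μ {x | ∀ i, 1 ≤ i → i ≤ j → t i x = ν i}).toReal)
    (p : ℕ) :
    Mmt μ t η (c / 2) p ≤ (DD C c η) ^ p * μ Set.univ := by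
  induction p with
  | zero => rw [Mmt_zero, pow_zero, one_mul]
  | succ p ih =>
    calc Mmt μ t η (c / 2) (p + 1) ≤ DD C c η * Mmt μ t η (c / 2) p :=
          Mmt_succ_le μ t ht ht0 c η hc hη0 hη1 C hC h25 p
      _ ≤ DD C c η * ((DD C c η) ^ p * μ Set.univ) := mul_le_mul_right ih _
      _ = (DD C c η) ^ (p + 1) * μ Set.univ := by ring

lemma markovW (μ : Measure X) [IsFiniteMeasure μ]
    (t : ℕ → X → ℕ) (ht : ∀ j, Measurable (t j)) (ht0 : ∀ x, t 0 x = 0)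
    (c η : ℝ) (hc : 0 < c) (hη0 : 0 < η)
    (p : ℕ) (s : ℝ) (hs : 0 ≤ s) :
    μ {x | s < Wsum t η p x} ≤
      ENNReal.ofReal (Real.exp (-(c / 2) * s)) * Mmt μ t η (c / 2) p := by
  have hWmeas : MeasurableSet {x | s < Wsum t η p x} := by
    have hmW : Measurable (Wsum t η p) := by
      apply Finset.measurable_sum
      intro i _
      exact (measurable_from_top (f := fun n : ℕ => ((n : ℝ)) ^ η)).comp
        ((ht (i + 1)).sub (ht i))
    exact measurableSet_lt measurable_const hmW
  rw [cyl_partition μ t ht p _ hWmeas, Mmt, ← ENNReal.tsum_mul_left]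
  apply ENNReal.tsum_le_tsum
  intro v
  by_cases hne : ({x | s < Wsum t η p x} ∩ Cyl t p v).Nonempty
  · obtain ⟨x, hxW, hxC⟩ := hne
    have hwl : s < wl η p v := by
      have := (cyl_vals t η ht0 p v x hxC).2
      rw [← this]
      exact hxW
    calc μ ({x | s < Wsum t η p x} ∩ Cyl t p v)
        ≤ μ (Cyl t p v) := measure_mono Set.inter_subset_right
      _ = 1 * μ (Cyl t p v) := (one_mul _).symm
      _ ≤ ENNReal.ofReal (Real.exp (-(c / 2) * s) * Real.exp ((c / 2) * wl η p v)) *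
            μ (Cyl t p v) := by
          apply mul_le_mul_left
          rw [← Real.exp_add]
          rw [show (1 : ℝ≥0∞) = ENNReal.ofReal (Real.exp 0) by simp]
          apply ENNReal.ofReal_le_ofReal
          apply Real.exp_le_exp.mpr
          nlinarith
      _ = ENNReal.ofReal (Real.exp (-(c / 2) * s)) *
            (ENNReal.ofReal (Real.exp ((c / 2) * wl η p v)) * μ (Cyl t p v)) := by
          rw [ENNReal.ofReal_mul (Real.exp_nonneg _), mul_assoc]
  · rw [Set.not_nonempty_iff_eq_empty] at hne
    rw [hne, measure_empty]
    exact zero_le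

end MmtSec
set_option maxHeartbeats 1000000 in
/-- Lemma 4.2 of Gouëzel, "Decay of correlations for nonuniformly expanding systems",
stretched exponential case `u_n = e^{-c n^η}`. -/
theorem tail_estimate_stretched_exponential
    {X : Type*} [MeasurableSpace X] (μ : Measure X) [IsFiniteMeasure μ]
    (k : X → ℕ) (hk : Measurable k) (hk1 : ∀ x, 1 ≤ k x)
    (t : ℕ → X → ℕ) (ht : ∀ j, Measurable (t j))
    (ht0 : ∀ x, t 0 x = 0) (htmono : ∀ j : ℕ, 1 ≤ j → ∀ x, t (j - 1) x < t j x)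
    (τ : X → ℕ) (hτ : ∀ x, τ x = t (k x) x)
    (L : ℕ) (hL : 1 ≤ L) (ε : ℝ) (hε : 0 < ε)
    (h24 : ∀ j : ℕ, 1 ≤ j → ∀ n : ℕ → ℕ, StrictMonoOn n (Set.Icc 1 (j - 1)) →
      ε * (μ {x | (∀ i, 1 ≤ i → i ≤ j - 1 → t i x = n i) ∧ j ≤ k x}).toReal ≤
        (μ {x | ((∀ i, 1 ≤ i → i ≤ j - 1 → t i x = n i) ∧ j ≤ k x) ∧
          k x ≤ j + L - 1}).toReal)
    (c η : ℝ) (hc : 0 < c) (hη0 : 0 < η) (hη1 : η ≤ 1)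
    (C : ℝ) (hC : 0 < C)
    (h25 : ∀ j : ℕ, ∀ n : ℕ, 1 ≤ n → ∀ ν : ℕ → ℕ,
      (μ {x | (∀ i, 1 ≤ i → i ≤ j → t i x = ν i) ∧ n < t (j + 1) x - t j x}).toReal ≤
        C * Real.exp (-c * (n : ℝ) ^ η) *
          (μ {x | ∀ i, 1 ≤ i → i ≤ j → t i x = ν i}).toReal) :
    ∃ c' > 0, ∃ C₁ > 0, ∀ n : ℕ, 1 ≤ n →
      (μ {x | n < τ x}).toReal ≤ C₁ * Real.exp (-c' * (n : ℝ) ^ η) := by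
  set ε₀ : ℝ := min ε 2⁻¹ with hε₀
  set θ : ℝ := 1 - ε₀ with hθ
  have hθ0 : 0 < θ := by
    have h : ε₀ ≤ 2⁻¹ := min_le_right _ _
    rw [hθ]; linarith
  have hθlt1 : θ < 1 := by
    have h : 0 < ε₀ := lt_min hε (by norm_num)
    rw [hθ]; linarith
  set a : ℝ := c / 2 with haa
  have hapos : 0 < a := by rw [haa]; linarith
  have hDDne : DD C c η ≠ ⊤ := DD_ne_top hc hη0 hη1 hC
  set Dr : ℝ := (DD C c η).toReal with hDrdef
  have hDr1 : (1 : ℝ) ≤ Dr := by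
    have h := one_le_DD (C := C) (η := η) hc
    calc (1 : ℝ) = (1 : ℝ≥0∞).toReal := by simp
      _ ≤ Dr := ENNReal.toReal_mono hDDne h
  have hDrpos : 0 < Dr := by linarith
  set lD : ℝ := max (Real.log Dr) 1 with hlDdef
  have hlD1 : (1 : ℝ) ≤ lD := le_max_right _ _
  have hlDpos : 0 < lD := by linarith
  have hlogDr0 : 0 ≤ Real.log Dr := Real.log_nonneg hDr1
  have hlogle : Real.log Dr ≤ lD := le_max_left _ _
  have hLpos : (0 : ℝ) < (L : ℝ) := by exact_mod_cast hL
  set δ : ℝ := a / (2 * (L : ℝ) * lD) with hδdef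
  have hδpos : 0 < δ := by rw [hδdef]; positivity
  set b₁ : ℝ := δ * (-Real.log θ) with hb₁def
  have hlogθ : Real.log θ < 0 := Real.log_neg hθ0 hθlt1
  have hb₁pos : 0 < b₁ := by rw [hb₁def]; apply mul_pos hδpos; linarith
  set U : ℝ := (μ Set.univ).toReal with hUdef
  have hU0 : 0 ≤ U := ENNReal.toReal_nonneg
  refine ⟨min b₁ (a / 2), lt_min hb₁pos (by linarith), ?_⟩
  refine ⟨U * (1 + Real.exp ((L : ℝ) * lD)) + 1, by positivity, ?_⟩
  intro n hn
  set s : ℝ := (n : ℝ) ^ η with hsdef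
  have hspos : 0 < s := Real.rpow_pos_of_pos (by exact_mod_cast hn) η
  set q : ℕ := ⌈δ * s⌉₊ with hqdef
  have hq1 : δ * s ≤ (q : ℝ) := Nat.le_ceil _
  have hq2 : (q : ℝ) < δ * s + 1 := Nat.ceil_lt_add_one (by positivity)
  set P : ℕ := L * q with hPdef
  -- inclusion of the tail event
  have hincl : {x | n < τ x} ⊆ {x | 1 + q * L ≤ k x} ∪ {x | s < Wsum t η P x} := by
    intro x hx
    simp only [Set.mem_setOf_eq] at hx
    by_cases hkx : k x ≤ P
    · right
      have h1 : τ x ≤ t P x := by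
        rw [hτ x]
        exact (t_strictMono t htmono x).monotone hkx
      have h2 : n < t P x := lt_of_lt_of_le hx h1
      have h3 : s < ((t P x : ℕ) : ℝ) ^ η :=
        Real.rpow_lt_rpow (Nat.cast_nonneg _) (by exact_mod_cast h2) hη0
      exact lt_of_lt_of_le h3 (W_ge t hη0 hη1 ht0 htmono P x)
    · left
      simp only [Set.mem_setOf_eq]
      have hPQ : P = q * L := Nat.mul_comm L q
      omega
  -- measure bound in ℝ≥0∞
  have hb : μ {x | n < τ x} ≤
      (ENNReal.ofReal θ) ^ q * μ Set.univ +
        ENNReal.ofReal (Real.exp (-(c / 2) * s)) * ((DD C c η) ^ P * μ Set.univ) := by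
    calc μ {x | n < τ x}
        ≤ μ ({x | 1 + q * L ≤ k x} ∪ {x | s < Wsum t η P x}) := measure_mono hincl
      _ ≤ μ {x | 1 + q * L ≤ k x} + μ {x | s < Wsum t η P x} := measure_union_le _ _
      _ ≤ _ := by
          apply add_le_add
          · exact geoDecay μ k hk t ht htmono L hL ε hε h24 q
          · calc μ {x | s < Wsum t η P x}
                ≤ ENNReal.ofReal (Real.exp (-(c / 2) * s)) * Mmt μ t η (c / 2) P :=
                  markovW μ t ht ht0 c η hc hη0 P s hspos.le
              _ ≤ ENNReal.ofReal (Real.exp (-(c / 2) * s)) * ((DD C c η) ^ P * μ Set.univ) :=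
                  mul_le_mul_right (Mmt_le μ t ht ht0 c η hc hη0 hη1 C hC h25 P) _
  -- pass to toReal
  have hRHSne : (ENNReal.ofReal θ) ^ q * μ Set.univ +
      ENNReal.ofReal (Real.exp (-(c / 2) * s)) * ((DD C c η) ^ P * μ Set.univ) ≠ ⊤ := by
    apply ENNReal.add_ne_top.mpr
    constructor
    · exact ENNReal.mul_ne_top (ENNReal.pow_ne_top ENNReal.ofReal_ne_top) (measure_ne_top μ _)
    · exact ENNReal.mul_ne_top ENNReal.ofReal_ne_top
        (ENNReal.mul_ne_top (ENNReal.pow_ne_top hDDne) (measure_ne_top μ _))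
  have h2 := ENNReal.toReal_mono hRHSne hb
  rw [ENNReal.toReal_add
      (ENNReal.mul_ne_top (ENNReal.pow_ne_top ENNReal.ofReal_ne_top) (measure_ne_top μ _))
      (ENNReal.mul_ne_top ENNReal.ofReal_ne_top
        (ENNReal.mul_ne_top (ENNReal.pow_ne_top hDDne) (measure_ne_top μ _))),
    ENNReal.toReal_mul, ENNReal.toReal_mul, ENNReal.toReal_mul, ENNReal.toReal_pow,
    ENNReal.toReal_pow, ENNReal.toReal_ofReal hθ0.le,
    ENNReal.toReal_ofReal (Real.exp_nonneg _)] at h2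
  rw [← hDrdef, ← hUdef] at h2
  -- real estimates
  have hE1 : θ ^ q ≤ Real.exp (-b₁ * s) := by
    have hrw : θ ^ q = Real.exp ((q : ℝ) * Real.log θ) := by
      rw [← Real.exp_log hθ0, ← Real.exp_nat_mul, Real.exp_log hθ0]
    rw [hrw]
    apply Real.exp_le_exp.mpr
    have h3 : (q : ℝ) * Real.log θ ≤ (δ * s) * Real.log θ :=
      mul_le_mul_of_nonpos_right hq1 hlogθ.le
    calc (q : ℝ) * Real.log θ ≤ (δ * s) * Real.log θ := h3
      _ = -b₁ * s := by rw [hb₁def]; ring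
  have hE2 : Real.exp (-(c / 2) * s) * Dr ^ P ≤
      Real.exp ((L : ℝ) * lD) * Real.exp (-(a / 2) * s) := by
    have hrw : Dr ^ P = Real.exp ((P : ℝ) * Real.log Dr) := by
      rw [← Real.exp_log hDrpos, ← Real.exp_nat_mul, Real.exp_log hDrpos]
    rw [hrw, ← Real.exp_add, ← Real.exp_add]
    apply Real.exp_le_exp.mpr
    have hPle : (P : ℝ) ≤ (L : ℝ) * (δ * s + 1) := by
      have : (P : ℝ) = (L : ℝ) * (q : ℝ) := by rw [hPdef]; push_cast; ring
      rw [this]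
      nlinarith
    have hPlog : (P : ℝ) * Real.log Dr ≤ (L : ℝ) * (δ * s + 1) * lD := by
      calc (P : ℝ) * Real.log Dr ≤ (P : ℝ) * lD :=
            mul_le_mul_of_nonneg_left hlogle (Nat.cast_nonneg _)
        _ ≤ (L : ℝ) * (δ * s + 1) * lD := by
            apply mul_le_mul_of_nonneg_right hPle hlDpos.le
    have hkey : (L : ℝ) * δ * lD = a / 2 := by
      rw [hδdef]
      field_simp
    have : (L : ℝ) * (δ * s + 1) * lD = (a / 2) * s + (L : ℝ) * lD := by
      rw [← hkey]; ring
    rw [this] at hPlog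
    have hcs : c * s = 2 * (a * s) := by rw [haa]; ring
    linarith
  -- combine
  have hc'1 : Real.exp (-b₁ * s) ≤ Real.exp (-(min b₁ (a / 2)) * s) := by
    apply Real.exp_le_exp.mpr
    have h := min_le_left b₁ (a / 2)
    exact mul_le_mul_of_nonneg_right (neg_le_neg h) hspos.le
  have hc'2 : Real.exp (-(a / 2) * s) ≤ Real.exp (-(min b₁ (a / 2)) * s) := by
    apply Real.exp_le_exp.mpr
    have h := min_le_right b₁ (a / 2)
    exact mul_le_mul_of_nonneg_right (neg_le_neg h) hspos.le
  calc (μ {x | n < τ x}).toReal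
      ≤ θ ^ q * U + Real.exp (-(c / 2) * s) * (Dr ^ P * U) := h2
    _ ≤ Real.exp (-b₁ * s) * U +
        (Real.exp ((L : ℝ) * lD) * Real.exp (-(a / 2) * s)) * U := by
        apply add_le_add
        · exact mul_le_mul_of_nonneg_right hE1 hU0
        · have := mul_le_mul_of_nonneg_right hE2 hU0
          calc Real.exp (-(c / 2) * s) * (Dr ^ P * U)
              = (Real.exp (-(c / 2) * s) * Dr ^ P) * U := by ring
            _ ≤ (Real.exp ((L : ℝ) * lD) * Real.exp (-(a / 2) * s)) * U := this
    _ ≤ Real.exp (-(min b₁ (a / 2)) * s) * U +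
        (Real.exp ((L : ℝ) * lD) * Real.exp (-(min b₁ (a / 2)) * s)) * U := by
        apply add_le_add
        · exact mul_le_mul_of_nonneg_right hc'1 hU0
        · apply mul_le_mul_of_nonneg_right _ hU0
          exact mul_le_mul_of_nonneg_left hc'2 (Real.exp_nonneg _)
    _ = U * (1 + Real.exp ((L : ℝ) * lD)) * Real.exp (-(min b₁ (a / 2)) * s) := by ring
    _ ≤ (U * (1 + Real.exp ((L : ℝ) * lD)) + 1) * Real.exp (-(min b₁ (a / 2)) * s) := by
        apply mul_le_mul_of_nonneg_right _ (Real.exp_nonneg _)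
        linarith
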